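/- (Lemma 1.3) Let d ≥ 3, 1 ≤ m ≤ d−2, λ > 0 with e^λ m < d+1, and N ≥ 2. For any j ∈ ℤ and any nonempty A ⊆ F ∩ (C_j ∪ ∂C_j) with F ∈ L_m, one has ‖φ_j‖_∞ ≤ [e^λ/(1 − e^λ m/(d+1))] · (1 − m/(d+1)) · (1 + (‖φ_j‖_∞ − 1) q_N). -/

import Mathlib

open MeasureTheory Filter
open scoped ENNReal Classical

namespace DiscCyl

/-- The lattice `ℤ^{d+1}`. -/
abbrev Lat (d : ℕ) := Fin (d + 1) → ℤ

/-- The discrete cylinder `E = (ℤ/Nℤ)^d × ℤ`. -/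
abbrev Cyl (d N : ℕ) := (Fin d → ZMod N) × ℤ

instance (N : ℕ) : MeasurableSpace (ZMod N) := ⊤

instance (N : ℕ) : Countable (ZMod N) := by
  cases N with
  | zero => exact inferInstanceAs (Countable ℤ)
  | succ n => exact inferInstanceAs (Countable (Fin (n + 1)))

/-- The canonical projection `π_E : ℤ^{d+1} → E`. -/
def projE (d N : ℕ) (v : Lat d) : Cyl d N :=
  (fun i => (v i.castSucc : ZMod N), v (Fin.last d))

/-- The `2(d+1)` unit vectors `±e_i` of `ℤ^{d+1}`. -/
def unitVecs (d : ℕ) : Finset (Lat d) :=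
  Finset.image (fun p : Fin (d + 1) × Bool => Pi.single p.1 (if p.2 then (1 : ℤ) else -1))
    Finset.univ

/-- One-step transition probability of simple random walk on the cylinder:
each of the `2(d+1)` unit moves of `ℤ^{d+1}` is taken with probability `1/(2(d+1))`
and projected to `E`. -/
noncomputable def stepProb (d N : ℕ) (x y : Cyl d N) : ℝ≥0∞ :=
  (((unitVecs d).filter fun e => x + projE d N e = y).card : ℝ≥0∞) / (2 * (d + 1))

/-- `Pl` is the family of laws (indexed by the starting point) of simple random walk
on the cylinder `E = (ℤ/Nℤ)^d × ℤ`. -/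
def IsCylRW (d N : ℕ) (Pl : Cyl d N → Measure (ℕ → Cyl d N)) : Prop :=
  (∀ x, IsProbabilityMeasure (Pl x)) ∧
    ∀ (x : Cyl d N) (n : ℕ) (γ : ℕ → Cyl d N),
      Pl x {ω | ∀ i ≤ n, ω i = γ i} =
        (if γ 0 = x then 1 else 0) * ∏ i ∈ Finset.range n, stepProb d N (γ i) (γ (i + 1))

/-- The lattice `ℤ^ν`. -/
abbrev ZLat (ν : ℕ) := Fin ν → ℤ

/-- Unit vectors of `ℤ^ν`. -/
def zUnitVecs (ν : ℕ) : Set (ZLat ν) :=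
  {v | ∃ i, v = Pi.single i 1 ∨ v = Pi.single i (-1)}

/-- One-step transition probability of simple random walk on `ℤ^ν`. -/
noncomputable def zStep (ν : ℕ) (x y : ZLat ν) : ℝ≥0∞ :=
  if y - x ∈ zUnitVecs ν then (2 * ν : ℝ≥0∞)⁻¹ else 0

/-- `Ql` is the family of laws of simple random walk on `ℤ^ν`. -/
def IsLatRW (ν : ℕ) (Ql : ZLat ν → Measure (ℕ → ZLat ν)) : Prop :=
  (∀ x, IsProbabilityMeasure (Ql x)) ∧
    ∀ (x : ZLat ν) (n : ℕ) (γ : ℕ → ZLat ν),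
      Ql x {ω | ∀ i ≤ n, ω i = γ i} =
        (if γ 0 = x then 1 else 0) * ∏ i ∈ Finset.range n, zStep ν (γ i) (γ (i + 1))

/-- `q(ν)`: the return probability to the origin of simple random walk on `ℤ^ν`. -/
noncomputable def retProb (ν : ℕ) (Ql : ZLat ν → Measure (ℕ → ZLat ν)) : ℝ :=
  ((Ql 0) {ω | ∃ n : ℕ, 1 ≤ n ∧ ω n = 0}).toReal

/-- Entrance time `H_U` (with value `⊤` if `U` is never entered). -/
noncomputable def entT {X : Type*} (U : Set X) (ω : ℕ → X) : ℕ∞ :=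
  sInf {t : ℕ∞ | ∃ n : ℕ, ω n ∈ U ∧ t = n}

/-- Exit time `T_U`. -/
noncomputable def exitT {X : Type*} (U : Set X) (ω : ℕ → X) : ℕ∞ :=
  entT Uᶜ ω

/-- `after t f ω = t + f (θ_t ω)`, with value `⊤` when `t = ⊤`. -/
noncomputable def after {X : Type*} (t : ℕ∞) (f : (ℕ → X) → ℕ∞) (ω : ℕ → X) : ℕ∞ :=
  t.recTopCoe ⊤ fun m => (m : ℕ∞) + f fun k => ω (k + m)

/-- The block `C_j = (ℤ/Nℤ)^d × ([(j-3/4)N, (j+3/4)N] ∩ ℤ)`. -/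
def Cblk (d N : ℕ) (j : ℤ) : Set (Cyl d N) :=
  {x | ((j : ℝ) - 3 / 4) * N ≤ (x.2 : ℝ) ∧ (x.2 : ℝ) ≤ ((j : ℝ) + 3 / 4) * N}

/-- The block `B_j = (ℤ/Nℤ)^d × [(j-1)N, (j+1)N]`. -/
def Bblk (d N : ℕ) (j : ℤ) : Set (Cyl d N) :=
  {x | (j - 1) * (N : ℤ) ≤ x.2 ∧ x.2 ≤ (j + 1) * (N : ℤ)}

/-- The block `B̃_j = (ℤ/Nℤ)^d × [(j-2)N+1, (j+2)N-1]`. -/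
def Btl (d N : ℕ) (j : ℤ) : Set (Cyl d N) :=
  {x | (j - 2) * (N : ℤ) + 1 ≤ x.2 ∧ x.2 ≤ (j + 2) * (N : ℤ) - 1}

/-- `D^j_1`: time of the first departure from `B̃_j` after the first return to `B_j`. -/
noncomputable def oneExc (d N : ℕ) (j : ℤ) (ω : ℕ → Cyl d N) : ℕ∞ :=
  after (entT (Bblk d N j) ω) (exitT (Btl d N j)) ω

/-- `D^j_k`: time of the `k`-th departure from `B̃_j` (after successive returns to `B_j`). -/
noncomputable def DD (d N : ℕ) (j : ℤ) : ℕ → (ℕ → Cyl d N) → ℕ∞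
  | 0, _ => 0
  | k + 1, ω => after (DD d N j k ω) (oneExc d N j) ω

/-- The law `P` of the walk with initial distribution uniform on `B_0`. -/
noncomputable def lawP (d N : ℕ) (Pl : Cyl d N → Measure (ℕ → Cyl d N)) :
    Measure (ℕ → Cyl d N) :=
  ((N : ℝ≥0∞) ^ d * (2 * N + 1))⁻¹ •
    Measure.sum fun x : Cyl d N => if x ∈ Bblk d N 0 then Pl x else 0

/-- Nearest-neighbour adjacency on the cylinder. -/
def adj (d N : ℕ) (x y : Cyl d N) : Prop :=
  x ≠ y ∧ ∃ e ∈ unitVecs d, y = x + projE d N e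

/-- `x` and `y` are connected by a nearest-neighbour path inside `S`. -/
def connIn (d N : ℕ) (S : Set (Cyl d N)) (x y : Cyl d N) : Prop :=
  Relation.ReflTransGen (fun a b => a ∈ S ∧ b ∈ S ∧ adj d N a b) x y

/-- `S` is a connected set. -/
def IsConnIn (d N : ℕ) (S : Set (Cyl d N)) : Prop :=
  ∀ x ∈ S, ∀ y ∈ S, connIn d N S x y

/-- The boundary `∂U`. -/
def bdry (d N : ℕ) (U : Set (Cyl d N)) : Set (Cyl d N) :=
  {x | x ∉ U ∧ ∃ y ∈ U, adj d N x y}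

/-- `ℓ^∞`-norm on `ℤ^{d+1}`. -/
def linf {d : ℕ} (v : Lat d) : ℕ := Finset.univ.sup fun i => (v i).natAbs

/-- `ℓ^∞`-distance induced on the cylinder. -/
noncomputable def cylDist (d N : ℕ) (x y : Cyl d N) : ℕ :=
  sInf {r : ℕ | ∃ v : Lat d, projE d N v = y - x ∧ linf v = r}

/-- `S` has `ℓ^∞`-diameter at least `L`. -/
def diamGE (d N : ℕ) (S : Set (Cyl d N)) (L : ℕ) : Prop :=
  ∃ x ∈ S, ∃ y ∈ S, L ≤ cylDist d N x y

/-- `X_{[0,n]}`: the set of points visited up to time `n`. -/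
def ran {X : Type*} (ω : ℕ → X) (n : ℕ) : Set X := {y | ∃ i ≤ n, ω i = y}

/-- The set of points visited up to the (possibly infinite) time `t`. -/
def ranE {X : Type*} (ω : ℕ → X) (t : ℕ∞) : Set X :=
  {y | ∃ i : ℕ, (i : ℕ∞) ≤ t ∧ ω i = y}

/-- `L_m`: projections to `E` of `m`-dimensional affine coordinate lattices of `ℤ^{d+1}`. -/
def Lcoll (d N m : ℕ) : Set (Set (Cyl d N)) :=
  {F | ∃ I : Finset (Fin (d + 1)), I.card = m ∧ ∃ y : Lat d,
      F = (fun v => projE d N (y + v)) '' {v : Lat d | ∀ i ∉ I, v i = 0}}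

/-- `A^j_m`: nonempty subsets of `C_j` contained in some `F ∈ L_m`. -/
def Adm (d N : ℕ) (j : ℤ) (m : ℕ) : Set (Finset (Cyl d N)) :=
  {A | A.Nonempty ∧ ↑A ⊆ Cblk d N j ∧ ∃ F ∈ Lcoll d N m, (↑A : Set (Cyl d N)) ⊆ F}

/-- The segment `{x + k·e : 0 ≤ k ≤ L}` (addition via `π_E`). -/
def segment (d N : ℕ) (x : Cyl d N) (e : Lat d) (L : ℕ) : Set (Cyl d N) :=
  {y | ∃ k : ℕ, k ≤ L ∧ y = x + projE d N ((k : ℤ) • e)}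

/-- The event `V_{K,j,t}` (with `k = ⌊t⌋` excursions). -/
def Vev (d N : ℕ) (K : ℝ) (j : ℤ) (k : ℕ) : Set (ℕ → Cyl d N) :=
  {ω | ∀ x ∈ Cblk d N j, ∀ e ∈ unitVecs d, ∃ i : ℕ, (i : ℝ) < Real.sqrt N ∧
      ∀ l : ℕ, i ≤ l → l ≤ i + ⌊K * Real.log N⌋₊ →
        x + projE d N ((l : ℤ) • e) ∉ ranE ω (DD d N j k ω)}

/-- The event `U_{K,j,t}` (with `k = ⌊t⌋` excursions). -/
def Uev (d N : ℕ) (K : ℝ) (j : ℤ) (k : ℕ) : Set (ℕ → Cyl d N) :=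
  {ω | ∀ F ∈ Lcoll d N 2, ∀ n : ℕ, (n : ℕ∞) ≤ DD d N j k ω →
      ∀ O₁ O₂ : Set (Cyl d N),
        O₁ ⊆ (F ∩ Cblk d N j) \ ran ω n → O₂ ⊆ (F ∩ Cblk d N j) \ ran ω n →
        IsConnIn d N O₁ → IsConnIn d N O₂ →
        diamGE d N O₁ ⌊K * Real.log N⌋₊ → diamGE d N O₂ ⌊K * Real.log N⌋₊ →
        ∀ p ∈ O₁, ∀ q ∈ O₂, connIn d N ((F ∩ Cblk d N j) \ ran ω n) p q}

/-- A (finite) set `S` disconnects the cylinder. -/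
def Disconnects (d N : ℕ) (S : Set (Cyl d N)) : Prop :=
  S.Finite ∧ ∃ M₀ : ℕ, ∀ M : ℕ, M₀ ≤ M → ∀ x y : Cyl d N,
    (M : ℤ) ≤ x.2 → y.2 ≤ -(M : ℤ) → ¬ connIn d N Sᶜ x y

/-- The disconnection time `T_N`. -/
noncomputable def discT (d N : ℕ) (ω : ℕ → Cyl d N) : ℕ∞ :=
  sInf {t : ℕ∞ | ∃ n : ℕ, Disconnects d N (ran ω n) ∧ t = n}

/-- `r ≤ t` for `t : ℕ∞` and a real threshold `r` (trivially true when `t = ⊤`). -/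
def geReal (t : ℕ∞) (r : ℝ) : Prop := ∀ n : ℕ, t = (n : ℕ∞) → r ≤ n

/-- `r < t` for `t : ℕ∞` and a real threshold `r` (trivially true when `t = ⊤`). -/
def gtReal (t : ℕ∞) (r : ℝ) : Prop := ∀ n : ℕ, t = (n : ℕ∞) → r < n

/-- `φ_j(z) = E_z[exp(λ Σ_{x∈A} 1{H_x < T_{B̃_j}})]`. -/
noncomputable def phi (d N : ℕ) (Pl : Cyl d N → Measure (ℕ → Cyl d N)) (j : ℤ) (lam : ℝ)
    (A : Finset (Cyl d N)) (z : Cyl d N) : ℝ :=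
  ∫ ω, Real.exp (lam * ∑ x ∈ A, if entT {x} ω < exitT (Btl d N j) ω then (1 : ℝ) else 0)
    ∂(Pl z)

/-- `‖φ_j‖_∞`. -/
noncomputable def phiSup (d N : ℕ) (Pl : Cyl d N → Measure (ℕ → Cyl d N)) (j : ℤ) (lam : ℝ)
    (A : Finset (Cyl d N)) : ℝ :=
  ⨆ z : Cyl d N, phi d N Pl j lam A z

/-- `q_N = sup {P_z[H_F < T_{B̃_j}] : F ∈ L_m, z ∈ ∂F}`. -/
noncomputable def qNval (d N m : ℕ) (Pl : Cyl d N → Measure (ℕ → Cyl d N)) (j : ℤ) : ℝ :=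
  sSup {r : ℝ | ∃ F ∈ Lcoll d N m, ∃ z ∈ bdry d N F,
      r = ((Pl z) {ω | entT F ω < exitT (Btl d N j) ω}).toReal}

/-- The times `τ_k`: `τ_0` is the entrance time of `(ℤ/Nℤ)^d × Nℤ`, and `τ_{k+1}` is the
first time after `τ_k` at which the vertical component has moved by exactly `N`. -/
noncomputable def tauT (d N : ℕ) : ℕ → (ℕ → Cyl d N) → ℕ∞
  | 0, ω => entT {x : Cyl d N | (N : ℤ) ∣ x.2} ω
  | k + 1, ω =>
      (tauT d N k ω).recTopCoe ⊤ fun m =>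
        sInf {t : ℕ∞ | ∃ n : ℕ, m < n ∧ ((ω n).2 - (ω m).2).natAbs = N ∧ t = n}

/-- `*`-adjacency on `ℤ²`. -/
def starAdj (x y : ℤ × ℤ) : Prop :=
  x ≠ y ∧ (x.1 - y.1).natAbs ≤ 1 ∧ (x.2 - y.2).natAbs ≤ 1


/-! ### Auxiliary development -/

section Aux

variable {d N : ℕ}

instance (N : ℕ) : MeasurableSingletonClass (ZMod N) := ⟨fun _ => trivial⟩

lemma msCyl (S : Set (Cyl d N)) : MeasurableSet S := S.to_countable.measurableSet

/-- Cylinder event: path agrees with `γ` up to time `n`. -/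
def pcyl (γ : ℕ → Cyl d N) (n : ℕ) : Set (ℕ → Cyl d N) := {ω | ∀ i ≤ n, ω i = γ i}

lemma msPcyl (γ : ℕ → Cyl d N) (n : ℕ) : MeasurableSet (pcyl γ n) := by
  have : pcyl γ n = ⋂ (i : ℕ) (_ : i ≤ n), (fun ω : ℕ → Cyl d N => ω i) ⁻¹' {γ i} := by
    ext ω; simp [pcyl]
  rw [this]
  exact MeasurableSet.iInter fun i => MeasurableSet.iInter fun _ =>
    (measurable_pi_apply i) (msCyl {γ i})

/-- The collection of cylinder events. -/
def cylC (d N : ℕ) : Set (Set (ℕ → Cyl d N)) := {s | ∃ n γ, s = pcyl γ n}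

lemma isPiSystem_cylC : IsPiSystem (cylC d N) := by
  rintro s ⟨n, γ, rfl⟩ t ⟨m, δ, rfl⟩ hne
  obtain ⟨ω, hω1, hω2⟩ := hne
  rcases le_total n m with h | h
  · refine ⟨m, δ, ?_⟩
    ext ω'; constructor
    · rintro ⟨h1, h2⟩; exact h2
    · intro h2
      refine ⟨fun i hi => ?_, h2⟩
      rw [h2 i (hi.trans h), ← hω2 i (hi.trans h), hω1 i hi]
  · refine ⟨n, γ, ?_⟩
    ext ω'; constructor
    · rintro ⟨h1, h2⟩; exact h1
    · intro h1
      refine ⟨h1, fun i hi => ?_⟩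
      rw [h1 i (hi.trans h), ← hω1 i (hi.trans h), hω2 i hi]

lemma generateFrom_cylC :
    (inferInstance : MeasurableSpace (ℕ → Cyl d N)) = .generateFrom (cylC d N) := by
  refine le_antisymm ?_ (MeasurableSpace.generateFrom_le ?_)
  · have key : ∀ (i : ℕ) (c : Cyl d N),
        MeasurableSet[MeasurableSpace.generateFrom (cylC d N)]
          ((fun ω : ℕ → Cyl d N => ω i) ⁻¹' {c}) := by
      intro i c
      have heq : (fun ω : ℕ → Cyl d N => ω i) ⁻¹' {c} =
          ⋃ g : {g : Fin (i + 1) → Cyl d N // g (Fin.last i) = c},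
            pcyl (fun k => g.1 ⟨min k i, by omega⟩) i := by
        ext ω
        simp only [Set.mem_preimage, Set.mem_singleton_iff, Set.mem_iUnion]
        constructor
        · intro h
          refine ⟨⟨fun k => ω k.1, by simpa [Fin.last] using h⟩, fun k hk => ?_⟩
          simp [min_eq_left hk]
        · rintro ⟨g, hg⟩
          have := hg i le_rfl
          rw [this]
          show (↑g : Fin (i+1) → Cyl d N) ⟨i ⊓ i, _⟩ = c
          convert g.2 using 2
          apply Fin.ext
          show i ⊓ i = i
          exact min_self i
      rw [heq]
      exact MeasurableSet.iUnion fun g => .basic _ ⟨i, _, rfl⟩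
    have hev : ∀ i : ℕ, @Measurable _ _ (MeasurableSpace.generateFrom (cylC d N)) _
        (fun ω : ℕ → Cyl d N => ω i) := fun i =>
      @measurable_to_countable (Cyl d N) (ℕ → Cyl d N) _ _
        (MeasurableSpace.generateFrom (cylC d N)) _ (fun ω => key i (ω i))
    exact iSup_le fun i =>
      (@measurable_iff_comap_le _ _ (MeasurableSpace.generateFrom (cylC d N)) _ _).mp (hev i)
  · rintro s ⟨n, γ, rfl⟩
    exact msPcyl γ n

end Aux

section EntL

variable {X : Type*}

lemma entT_le_coe {U : Set X} {ω : ℕ → X} {n : ℕ} (h : ω n ∈ U) :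
    entT U ω ≤ (n : ℕ∞) := sInf_le ⟨n, h, rfl⟩

lemma coe_lt_entT_iff {U : Set X} {ω : ℕ → X} {n : ℕ} :
    (n : ℕ∞) < entT U ω ↔ ∀ i ≤ n, ω i ∉ U := by
  constructor
  · intro h i hi hiU
    have h2 : (n : ℕ∞) < (i : ℕ∞) := lt_of_lt_of_le h (entT_le_coe hiU)
    exact absurd (Nat.cast_lt.mp h2) (not_lt.mpr hi)
  · intro h
    have h1 : ((n + 1 : ℕ) : ℕ∞) ≤ entT U ω := le_sInf (by
      rintro t ⟨k, hk, rfl⟩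
      have hnk : n < k := by by_contra hc; exact h k (not_lt.mp hc) hk
      exact_mod_cast hnk)
    refine lt_of_lt_of_le ?_ h1
    exact_mod_cast lt_add_one n

lemma entT_lt_exitT_iff {U V : Set X} {ω : ℕ → X} :
    entT U ω < exitT V ω ↔ ∃ n, ω n ∈ U ∧ ∀ i ≤ n, ω i ∈ V := by
  constructor
  · intro h
    obtain ⟨t, ⟨k, hk, rfl⟩, htlt⟩ := sInf_lt_iff.mp h
    refine ⟨k, hk, fun i hi => ?_⟩
    have := coe_lt_entT_iff.mp htlt i hi
    simpa using this
  · rintro ⟨n, hU, hV⟩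
    refine lt_of_le_of_lt (entT_le_coe hU) ?_
    rw [exitT]
    exact coe_lt_entT_iff.mpr fun i hi => by simpa using hV i hi

end EntL

section Markov

variable {d N : ℕ}

/-- Weight of a finite path. -/
noncomputable def wgt (d N : ℕ) (z : Cyl d N) (γ : ℕ → Cyl d N) (n : ℕ) : ℝ≥0∞ :=
  (if γ 0 = z then 1 else 0) * ∏ i ∈ Finset.range n, stepProb d N (γ i) (γ (i + 1))

lemma pl_pcyl {Pl : Cyl d N → Measure (ℕ → Cyl d N)} (hPl : IsCylRW d N Pl)
    (z : Cyl d N) (γ : ℕ → Cyl d N) (n : ℕ) :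
    Pl z (pcyl γ n) = wgt d N z γ n := hPl.2 z n γ

/-- Shift of a path. -/
def shf (n : ℕ) (ω : ℕ → Cyl d N) : ℕ → Cyl d N := fun k => ω (k + n)

lemma measurable_shf (n : ℕ) : Measurable (shf (d := d) (N := N) n) :=
  measurable_pi_lambda _ fun k => measurable_pi_apply (k + n)

/-- splice two paths at time `n`. -/
def splice (γ : ℕ → Cyl d N) (n : ℕ) (δ : ℕ → Cyl d N) : ℕ → Cyl d N :=
  fun i => if i ≤ n then γ i else δ (i - n)

/-- The key Markov factorization. -/
lemma markov_fact {Pl : Cyl d N → Measure (ℕ → Cyl d N)} (hPl : IsCylRW d N Pl)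
    (z : Cyl d N) (γ : ℕ → Cyl d N) (n : ℕ) :
    Measure.map (shf n) ((Pl z).restrict (pcyl γ n)) = wgt d N z γ n • Pl (γ n) := by
  haveI : ∀ x, IsProbabilityMeasure (Pl x) := hPl.1
  have hmap : ∀ B : Set (ℕ → Cyl d N), MeasurableSet B →
      Measure.map (shf n) ((Pl z).restrict (pcyl γ n)) B =
        Pl z (shf n ⁻¹' B ∩ pcyl γ n) := by
    intro B hB
    rw [Measure.map_apply (measurable_shf n) hB, Measure.restrict_apply ((measurable_shf n) hB)]
  haveI : IsFiniteMeasure (Measure.map (shf n) ((Pl z).restrict (pcyl γ n))) := by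
    constructor
    rw [hmap Set.univ MeasurableSet.univ]
    exact lt_of_le_of_lt (measure_mono (Set.inter_subset_right.trans (Set.subset_univ _)))
      (measure_lt_top _ _)
  refine ext_of_generate_finite (cylC d N) generateFrom_cylC isPiSystem_cylC ?_ ?_
  · rintro s ⟨m, δ, rfl⟩
    rw [hmap _ (msPcyl δ m)]
    by_cases hc : δ 0 = γ n
    · have hset : shf n ⁻¹' pcyl δ m ∩ pcyl γ n = pcyl (splice γ n δ) (n + m) := by
        ext ω
        simp only [Set.mem_inter_iff, Set.mem_preimage, pcyl, Set.mem_setOf_eq, splice]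
        constructor
        · rintro ⟨h1, h2⟩ i hi
          by_cases hin : i ≤ n
          · simp [hin, h2 i hin]
          · simp only [hin, if_false]
            have : ω i = ω ((i - n) + n) := by congr 1; omega
            rw [this]
            exact h1 (i - n) (by omega)
        · intro h
          constructor
          · intro i hi
            have hh := h (i + n) (by omega)
            by_cases hi0 : i = 0
            · subst hi0
              show ω (0 + n) = δ 0
              simpa [hc] using hh
            · have hgt : ¬ (i + n ≤ n) := by omega
              simp only [hgt, if_false] at hh
              show ω (i + n) = δ i
              simpa [Nat.add_sub_cancel] using hh
          · intro i hi
            simpa [hi] using h i (hi.trans (by omega))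
      rw [hset, pl_pcyl hPl, Measure.smul_apply, smul_eq_mul, pl_pcyl hPl, wgt, wgt, wgt]
      have h0 : splice γ n δ 0 = γ 0 := by simp [splice]
      rw [h0, Finset.prod_range_add]
      have hr1 : ∀ i ∈ Finset.range n,
          stepProb d N (splice γ n δ i) (splice γ n δ (i + 1)) =
          stepProb d N (γ i) (γ (i + 1)) := by
        intro i hi
        simp only [Finset.mem_range] at hi
        simp [splice, Nat.le_of_lt hi, Nat.succ_le_of_lt hi]
      have hr2 : ∀ i ∈ Finset.range m,
          stepProb d N (splice γ n δ (n + i)) (splice γ n δ (n + i + 1)) =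
          stepProb d N (δ i) (δ (i + 1)) := by
        intro i _
        have e1 : splice γ n δ (n + i) = δ i := by
          by_cases hi0 : i = 0
          · subst hi0; simp [splice, hc]
          · have hgt : ¬ (n + i ≤ n) := by omega
            simp only [splice, hgt, if_false]
            congr 1; omega
        have e2 : splice γ n δ (n + i + 1) = δ (i + 1) := by
          have hgt : ¬ (n + i + 1 ≤ n) := by omega
          simp only [splice, hgt, if_false]
          congr 1; omega
        rw [e1, e2]
      rw [Finset.prod_congr rfl hr1, Finset.prod_congr rfl hr2, if_pos hc]
      ring
    · have hset : shf n ⁻¹' pcyl δ m ∩ pcyl γ n = ∅ := by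
        ext ω
        simp only [Set.mem_inter_iff, Set.mem_preimage, pcyl, Set.mem_setOf_eq,
          Set.mem_empty_iff_false, iff_false, not_and]
        intro h1 h2
        have ha := h1 0 (Nat.zero_le m)
        have hb := h2 n le_rfl
        apply hc
        rw [← ha, ← hb]
        show ω (0 + n) = ω n
        congr 1; omega
      rw [hset]
      rw [Measure.smul_apply, smul_eq_mul, pl_pcyl hPl]
      simp [hc, wgt]
  · rw [hmap Set.univ MeasurableSet.univ]
    simp only [Set.preimage_univ, Set.univ_inter]
    rw [pl_pcyl hPl, Measure.smul_apply, smul_eq_mul]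
    simp [measure_univ]

end Markov
section Walk

variable {d N : ℕ}

lemma msEnt (U V : Set (Cyl d N)) :
    MeasurableSet {ω : ℕ → Cyl d N | entT U ω < exitT V ω} := by
  have hset : {ω : ℕ → Cyl d N | entT U ω < exitT V ω} =
      ⋃ n : ℕ, ((fun ω : ℕ → Cyl d N => ω n) ⁻¹' U ∩
        ⋂ (i : ℕ) (_ : i ≤ n), (fun ω : ℕ → Cyl d N => ω i) ⁻¹' V) := by
    ext ω
    simp only [Set.mem_setOf_eq, entT_lt_exitT_iff, Set.mem_iUnion, Set.mem_inter_iff,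
      Set.mem_preimage, Set.mem_iInter]
  rw [hset]
  exact MeasurableSet.iUnion fun n =>
    ((measurable_pi_apply n) (msCyl U)).inter
      (MeasurableSet.iInter fun i => MeasurableSet.iInter fun _ =>
        (measurable_pi_apply i) (msCyl V))

/-- The integrand of `φ` in multiplicative `ℝ≥0∞` form. -/
noncomputable def gfun (d N : ℕ) (j : ℤ) (lam : ℝ) (A : Finset (Cyl d N))
    (ω : ℕ → Cyl d N) : ℝ≥0∞ :=
  ∏ x ∈ A, (if entT {x} ω < exitT (Btl d N j) ω then ENNReal.ofReal (Real.exp lam) else 1)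

variable {j : ℤ} {lam : ℝ} {A : Finset (Cyl d N)}

lemma measurable_gfun : Measurable (gfun d N j lam A) := by
  refine Finset.measurable_prod _ fun x _ => Measurable.ite (msEnt {x} (Btl d N j))
    measurable_const measurable_const

lemma one_le_ofReal_exp (hlam : 0 < lam) : 1 ≤ ENNReal.ofReal (Real.exp lam) :=
  ENNReal.one_le_ofReal.mpr (Real.one_le_exp hlam.le)

lemma one_le_gfun (hlam : 0 < lam) (ω : ℕ → Cyl d N) : 1 ≤ gfun d N j lam A ω :=
  Finset.one_le_prod' fun x _ => by
    split
    · exact one_le_ofReal_exp hlam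
    · exact le_rfl

lemma gfun_le (hlam : 0 < lam) (ω : ℕ → Cyl d N) :
    gfun d N j lam A ω ≤ ENNReal.ofReal (Real.exp lam) ^ A.card :=
  Finset.prod_le_pow_card _ _ _ fun x _ => by
    split
    · exact le_rfl
    · exact one_le_ofReal_exp hlam

lemma ofReal_integrand (ω : ℕ → Cyl d N) :
    ENNReal.ofReal (Real.exp (lam * ∑ x ∈ A,
        if entT {x} ω < exitT (Btl d N j) ω then (1 : ℝ) else 0)) = gfun d N j lam A ω := by
  rw [Finset.mul_sum, Real.exp_sum]
  rw [ENNReal.ofReal_prod_of_nonneg (fun x _ => (Real.exp_pos _).le)]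
  refine Finset.prod_congr rfl fun x _ => ?_
  by_cases h : entT {x} ω < exitT (Btl d N j) ω
  · simp [h]
  · simp [h]

/-- The `ℝ≥0∞` version of `phi`. -/
noncomputable def Phi (d N : ℕ) (Pl : Cyl d N → Measure (ℕ → Cyl d N)) (j : ℤ) (lam : ℝ)
    (A : Finset (Cyl d N)) (z : Cyl d N) : ℝ≥0∞ :=
  ∫⁻ ω, gfun d N j lam A ω ∂(Pl z)

variable {Pl : Cyl d N → Measure (ℕ → Cyl d N)}

lemma phi_eq (hPl : IsCylRW d N Pl) (z : Cyl d N) :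
    phi d N Pl j lam A z = (Phi d N Pl j lam A z).toReal := by
  haveI := hPl.1 z
  rw [phi, integral_eq_lintegral_of_nonneg_ae]
  · rw [Phi]
    congr 1
    refine lintegral_congr fun ω => ofReal_integrand ω
  · exact Filter.Eventually.of_forall fun ω => Real.exp_nonneg _
  · refine Measurable.aestronglyMeasurable (Real.measurable_exp.comp (measurable_const.mul ?_))
    exact Finset.measurable_sum _ fun x _ => Measurable.ite (msEnt {x} (Btl d N j))
      measurable_const measurable_const

lemma one_le_Phi (hPl : IsCylRW d N Pl) (hlam : 0 < lam) (z : Cyl d N) :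
    1 ≤ Phi d N Pl j lam A z := by
  haveI := hPl.1 z
  calc (1 : ℝ≥0∞) = ∫⁻ _, 1 ∂(Pl z) := by simp
  _ ≤ Phi d N Pl j lam A z := lintegral_mono fun ω => one_le_gfun hlam ω

lemma Phi_le (hPl : IsCylRW d N Pl) (hlam : 0 < lam) (z : Cyl d N) :
    Phi d N Pl j lam A z ≤ ENNReal.ofReal (Real.exp lam) ^ A.card := by
  haveI := hPl.1 z
  calc Phi d N Pl j lam A z ≤ ∫⁻ _, ENNReal.ofReal (Real.exp lam) ^ A.card ∂(Pl z) :=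
    lintegral_mono fun ω => gfun_le hlam ω
  _ = ENNReal.ofReal (Real.exp lam) ^ A.card := by simp

lemma Phi_ne_top (hPl : IsCylRW d N Pl) (hlam : 0 < lam) (z : Cyl d N) :
    Phi d N Pl j lam A z ≠ ⊤ :=
  ne_top_of_le_ne_top (ENNReal.pow_ne_top ENNReal.ofReal_ne_top) (Phi_le hPl hlam z)

/-- Pathwise one-step inequality. -/
lemma gfun_le_shift (hlam : 0 < lam) (ω : ℕ → Cyl d N) :
    gfun d N j lam A ω ≤ ENNReal.ofReal (Real.exp lam) * gfun d N j lam A (shf 1 ω) := by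
  set L := ENNReal.ofReal (Real.exp lam) with hLdef
  have hL : 1 ≤ L := one_le_ofReal_exp hlam
  have hfac : ∀ x ∈ A,
      (if entT {x} ω < exitT (Btl d N j) ω then L else 1) ≤
      (if x = ω 0 then L else 1) *
        (if entT {x} (shf 1 ω) < exitT (Btl d N j) (shf 1 ω) then L else 1) := by
    intro x _
    by_cases hD : entT {x} ω < exitT (Btl d N j) ω
    · rw [if_pos hD]
      obtain ⟨n, hx, hV⟩ := entT_lt_exitT_iff.mp hD
      simp only [Set.mem_singleton_iff] at hx
      cases n with
      | zero =>
        rw [if_pos hx.symm]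
        calc L = L * 1 := (mul_one L).symm
        _ ≤ L * (if entT {x} (shf 1 ω) < exitT (Btl d N j) (shf 1 ω) then L else 1) := by
            refine mul_le_mul_right ?_ L
            split
            · exact hL
            · exact le_rfl
      | succ k =>
        have hD' : entT {x} (shf 1 ω) < exitT (Btl d N j) (shf 1 ω) := by
          refine entT_lt_exitT_iff.mpr ⟨k, ?_, fun i hi => ?_⟩
          · show ω (k + 1) = x
            exact hx
          · show ω (i + 1) ∈ Btl d N j
            exact hV (i + 1) (by omega)
        rw [if_pos hD']
        calc L = 1 * L := (one_mul L).symm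
        _ ≤ (if x = ω 0 then L else 1) * L := by
            refine mul_le_mul_left ?_ L
            split
            · exact hL
            · exact le_rfl
    · rw [if_neg hD]
      refine one_le_mul ?_ ?_ <;> (split; exacts [hL, le_rfl])
  calc gfun d N j lam A ω ≤ ∏ x ∈ A, ((if x = ω 0 then L else 1) *
      (if entT {x} (shf 1 ω) < exitT (Btl d N j) (shf 1 ω) then L else 1)) :=
    Finset.prod_le_prod' hfac
  _ = (∏ x ∈ A, (if x = ω 0 then L else 1)) * gfun d N j lam A (shf 1 ω) :=
    Finset.prod_mul_distrib
  _ ≤ L * gfun d N j lam A (shf 1 ω) := by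
      refine mul_le_mul_left ?_ _
      rw [Finset.prod_ite_eq' A (ω 0) fun _ => L]
      split
      · exact le_rfl
      · exact hL

lemma meas_inter_full {Ω : Type*} [MeasurableSpace Ω] {μ : Measure Ω} {T S : Set Ω}
    (hT : μ Tᶜ = 0) : μ (S ∩ T) = μ S := by
  refine le_antisymm (measure_mono Set.inter_subset_left) ?_
  calc μ S ≤ μ ((S ∩ T) ∪ Tᶜ) := measure_mono (by
    intro a ha
    by_cases h : a ∈ T
    · exact Or.inl ⟨ha, h⟩
    · exact Or.inr h)
  _ ≤ μ (S ∩ T) + μ Tᶜ := measure_union_le _ _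
  _ = μ (S ∩ T) := by rw [hT, add_zero]

lemma pl_time_zero (hPl : IsCylRW d N Pl) (z : Cyl d N) :
    Pl z {ω : ℕ → Cyl d N | ω 0 = z}ᶜ = 0 := by
  haveI := hPl.1 z
  have h1 : {ω : ℕ → Cyl d N | ω 0 = z} = pcyl (fun _ => z) 0 := by
    ext ω; simp [pcyl, Nat.le_zero]
  rw [h1]
  rw [prob_compl_eq_one_sub (msPcyl (fun _ => z) 0), pl_pcyl hPl]
  simp [wgt]

lemma card_unitVecs : (unitVecs d).card = 2 * (d + 1) := by
  rw [unitVecs, Finset.card_image_of_injective _ ?_, Finset.card_univ]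
  · simp [Fintype.card_prod, mul_comm]
  · rintro ⟨i, b⟩ ⟨i', b'⟩ h
    have hne : ∀ (c : Bool), (if c then (1:ℤ) else -1) ≠ 0 := by intro c; cases c <;> simp
    have hii : i = i' := by
      by_contra hc
      have hci := congrFun h i
      dsimp only at hci
      rw [Pi.single_eq_same, Pi.single_eq_of_ne hc] at hci
      exact hne b hci
    subst hii
    have hci := congrFun h i
    dsimp only at hci
    rw [Pi.single_eq_same, Pi.single_eq_same] at hci
    have this := hci
    have hbb : b = b' := by
      cases b <;> cases b' <;> simp_all <;> omega
    rw [hbb]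

/-- One-step decomposition of the walk's law. -/
lemma map_shf_one (hPl : IsCylRW d N Pl) (z : Cyl d N) :
    Measure.map (shf 1) (Pl z) =
      (2 * ((d : ℝ≥0∞) + 1))⁻¹ • ∑ e ∈ unitVecs d, Pl (z + projE d N e) := by
  haveI : ∀ x, IsProbabilityMeasure (Pl x) := hPl.1
  haveI : IsProbabilityMeasure (Measure.map (shf 1) (Pl z)) :=
    Measure.isProbabilityMeasure_map (measurable_shf 1).aemeasurable
  have hden : ((2 * (d + 1) : ℕ) : ℝ≥0∞) = 2 * ((d : ℝ≥0∞) + 1) := by push_cast; ring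
  have hden0 : (2 * ((d : ℝ≥0∞) + 1)) ≠ 0 := by simp
  have hdent : (2 * ((d : ℝ≥0∞) + 1)) ≠ ⊤ := by
    refine ENNReal.mul_ne_top (by simp) (by simp [ENNReal.add_ne_top])
  refine ext_of_generate_finite (cylC d N) generateFrom_cylC isPiSystem_cylC ?_ ?_
  · rintro s ⟨m, δ, rfl⟩
    rw [Measure.map_apply (measurable_shf 1) (msPcyl δ m)]
    have hfull := pl_time_zero hPl z
    rw [← meas_inter_full (S := shf 1 ⁻¹' pcyl δ m) hfull]
    have hset : shf 1 ⁻¹' pcyl δ m ∩ {ω : ℕ → Cyl d N | ω 0 = z} =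
        pcyl (fun i => if i = 0 then z else δ (i - 1)) (m + 1) := by
      ext ω
      simp only [Set.mem_inter_iff, Set.mem_preimage, pcyl, Set.mem_setOf_eq]
      constructor
      · rintro ⟨h1, h2⟩ i hi
        by_cases hi0 : i = 0
        · simpa [hi0] using h2
        · simp only [hi0, if_false]
          obtain ⟨k, rfl⟩ : ∃ k, i = k + 1 := ⟨i - 1, by omega⟩
          have := h1 k (by omega)
          simpa [shf, Nat.add_sub_cancel] using this
      · intro h
        constructor
        · intro i hi
          have := h (i + 1) (by omega)
          simpa [shf, Nat.add_sub_cancel] using this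
        · simpa using h 0 (by omega)
    rw [hset, pl_pcyl hPl]
    rw [Measure.smul_apply, Measure.finset_sum_apply, smul_eq_mul]
    have hRH : ∀ e ∈ unitVecs d,
        Pl (z + projE d N e) (pcyl δ m) =
          (if δ 0 = z + projE d N e then 1 else 0) *
            ∏ i ∈ Finset.range m, stepProb d N (δ i) (δ (i + 1)) := fun e _ => pl_pcyl hPl _ _ _
    rw [Finset.sum_congr rfl hRH, ← Finset.sum_mul]
    have hsum : (∑ e ∈ unitVecs d, if δ 0 = z + projE d N e then (1:ℝ≥0∞) else 0) =
        ((unitVecs d).filter fun e => z + projE d N e = δ 0).card := by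
      rw [Finset.sum_boole]
      congr 1
      exact congrArg Finset.card (Finset.filter_congr fun e _ => eq_comm)
    rw [hsum, wgt]
    have h0 : (if (0:ℕ) = 0 then z else δ 0) = z := by simp
    rw [if_pos h0]
    rw [Finset.prod_range_succ']
    have he1 : ∀ i ∈ Finset.range m,
        stepProb d N (if i + 1 = 0 then z else δ (i + 1 - 1))
            (if i + 1 + 1 = 0 then z else δ (i + 1 + 1 - 1)) =
          stepProb d N (δ i) (δ (i + 1)) := by
      intro i _
      simp [Nat.add_sub_cancel]
    rw [Finset.prod_congr rfl he1]
    have he0 : stepProb d N (if (0:ℕ) = 0 then z else δ (0-1)) (if (0+1:ℕ) = 0 then z else δ (0+1-1)) =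
        stepProb d N z (δ 0) := by norm_num
    rw [he0, stepProb]
    rw [ENNReal.div_eq_inv_mul]
    ring
  · rw [Measure.map_apply (measurable_shf 1) MeasurableSet.univ]
    simp only [Set.preimage_univ, measure_univ]
    rw [Measure.smul_apply, Measure.finset_sum_apply, smul_eq_mul]
    simp only [measure_univ]
    rw [Finset.sum_const, card_unitVecs, nsmul_eq_mul, mul_one, ← hden]
    exact (ENNReal.inv_mul_cancel (Nat.cast_ne_zero.mpr (by omega))
      (ENNReal.natCast_ne_top _)).symm

/-- One-step bound for `Phi`. -/
lemma Phi_step (hPl : IsCylRW d N Pl) (hlam : 0 < lam) (z : Cyl d N) :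
    Phi d N Pl j lam A z ≤ ENNReal.ofReal (Real.exp lam) *
      ((2 * ((d : ℝ≥0∞) + 1))⁻¹ * ∑ e ∈ unitVecs d, Phi d N Pl j lam A (z + projE d N e)) := by
  calc Phi d N Pl j lam A z
      ≤ ∫⁻ ω, ENNReal.ofReal (Real.exp lam) * gfun d N j lam A (shf 1 ω) ∂(Pl z) :=
        lintegral_mono fun ω => gfun_le_shift hlam ω
  _ = ENNReal.ofReal (Real.exp lam) * ∫⁻ ω, gfun d N j lam A (shf 1 ω) ∂(Pl z) :=
        lintegral_const_mul' _ _ ENNReal.ofReal_ne_top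
  _ = ENNReal.ofReal (Real.exp lam) *
      ((2 * ((d : ℝ≥0∞) + 1))⁻¹ * ∑ e ∈ unitVecs d, Phi d N Pl j lam A (z + projE d N e)) := by
      congr 1
      rw [← lintegral_map measurable_gfun (measurable_shf 1), map_shf_one hPl z,
        lintegral_smul_measure, lintegral_finset_sum_measure]
      rfl

end Walk
section StrongMarkov

variable {d N : ℕ}

/-- Good prefixes: first hit of `F` at time `n`, staying in `V`. -/
def goodPre (F V : Set (Cyl d N)) (n : ℕ) (g : Fin (n + 1) → Cyl d N) : Prop :=
  g (Fin.last n) ∈ F ∧ (∀ i : Fin (n + 1), (i : ℕ) < n → g i ∉ F) ∧ ∀ i, g i ∈ V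

/-- Extension of a finite prefix to an infinite path. -/
def extg {n : ℕ} (g : Fin (n + 1) → Cyl d N) : ℕ → Cyl d N :=
  fun k => g ⟨min k n, by omega⟩

lemma extg_eq {n : ℕ} (g : Fin (n + 1) → Cyl d N) {k : ℕ} (hk : k ≤ n) :
    extg g k = g ⟨k, by omega⟩ := by
  rw [extg]
  congr 1
  exact Fin.ext (by simpa using hk)

lemma mem_pcyl_extg {n : ℕ} {g : Fin (n + 1) → Cyl d N} {ω : ℕ → Cyl d N}
    (h : ω ∈ pcyl (extg g) n) (i : Fin (n + 1)) : ω i = g i := by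
  have hi : (i : ℕ) ≤ n := by omega
  rw [h i hi, extg_eq g hi]

/-- The index type for the strong Markov decomposition. -/
def SMIdx (F V : Set (Cyl d N)) : Type _ :=
  Σ n : ℕ, {g : Fin (n + 1) → Cyl d N // goodPre F V n g}

instance (F V : Set (Cyl d N)) : Countable (SMIdx F V) := by
  rw [SMIdx]; infer_instance

/-- The piece of the decomposition indexed by `p`. -/
def SMset (F V : Set (Cyl d N)) (p : SMIdx F V) : Set (ℕ → Cyl d N) :=
  pcyl (extg p.2.1) p.1

lemma SMset_subset' {F V : Set (Cyl d N)} {n : ℕ} {g : Fin (n + 1) → Cyl d N}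
    (hg : goodPre F V n g) {ω : ℕ → Cyl d N} (h : ω ∈ pcyl (extg g) n) :
    ω n ∈ F ∧ (∀ i < n, ω i ∉ F) ∧ ∀ i ≤ n, ω i ∈ V := by
  refine ⟨?_, fun i hi => ?_, fun i hi => ?_⟩
  · have h1 := mem_pcyl_extg h (Fin.last n)
    simp only [Fin.val_last] at h1
    rw [h1]; exact hg.1
  · have h1 := mem_pcyl_extg h ⟨i, by omega⟩
    rw [h1]; exact hg.2.1 ⟨i, by omega⟩ hi
  · have h1 := mem_pcyl_extg h ⟨i, by omega⟩
    rw [h1]; exact hg.2.2 ⟨i, by omega⟩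

lemma SMset_subset (F V : Set (Cyl d N)) (p : SMIdx F V) {ω : ℕ → Cyl d N}
    (h : ω ∈ SMset F V p) :
    ω p.1 ∈ F ∧ (∀ i < p.1, ω i ∉ F) ∧ ∀ i ≤ p.1, ω i ∈ V :=
  SMset_subset' p.2.2 h

lemma SM_decomp (F V : Set (Cyl d N)) :
    {ω : ℕ → Cyl d N | entT F ω < exitT V ω} = ⋃ p : SMIdx F V, SMset F V p := by
  ext ω
  simp only [Set.mem_setOf_eq, entT_lt_exitT_iff, Set.mem_iUnion]
  constructor
  · rintro ⟨k, hkF, hkV⟩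
    have h1 : ∃ m, ω m ∈ F := ⟨k, hkF⟩
    set n := Nat.find h1 with hn
    have hnk : n ≤ k := Nat.find_min' h1 hkF
    refine ⟨⟨n, ⟨fun i => ω i, ?_, fun i hi => Nat.find_min h1 hi, fun i => hkV i (by omega)⟩⟩, ?_⟩
    · simpa using Nat.find_spec h1
    · intro i hi
      rw [extg_eq _ hi]
  · rintro ⟨p, hp⟩
    obtain ⟨h1, _, h3⟩ := SMset_subset F V p hp
    exact ⟨p.1, h1, h3⟩

lemma SM_disjoint (F V : Set (Cyl d N)) :
    Pairwise (Function.onFun Disjoint (SMset F V)) := by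
  intro p q hpq
  rw [Function.onFun, Set.disjoint_left]
  intro ω hωp hωq
  apply hpq
  obtain ⟨n, g, hg⟩ := p
  obtain ⟨n', g', hg'⟩ := q
  obtain ⟨hp1, hp2, -⟩ := SMset_subset' hg hωp
  obtain ⟨hq1, hq2, -⟩ := SMset_subset' hg' hωq
  have hnn : n = n' := by
    by_contra hne
    rcases Nat.lt_or_ge n n' with h | h
    · exact hq2 n h hp1
    · exact hp2 n' (by omega) hq1
  subst hnn
  have hgg : g = g' := by
    funext i
    have e1 : ω i = g i := mem_pcyl_extg hωp i
    have e2 : ω i = g' i := mem_pcyl_extg hωq i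
    exact e1.symm.trans e2
  subst hgg
  rfl

variable {j : ℤ} {lam : ℝ} {A : Finset (Cyl d N)} {Pl : Cyl d N → Measure (ℕ → Cyl d N)}

/-- Pathwise: on the complement of the hitting event, the integrand is `1`. -/
lemma gfun_eq_one {F : Set (Cyl d N)} (hAF : ∀ x ∈ A, x ∈ F) {ω : ℕ → Cyl d N}
    (h : ¬ entT F ω < exitT (Btl d N j) ω) : gfun d N j lam A ω = 1 := by
  refine Finset.prod_eq_one fun x hx => ?_
  rw [if_neg]
  intro hD
  apply h
  obtain ⟨n, hn, hV⟩ := entT_lt_exitT_iff.mp hD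
  simp only [Set.mem_singleton_iff] at hn
  exact entT_lt_exitT_iff.mpr ⟨n, by rw [hn]; exact hAF x hx, hV⟩

/-- Pathwise: on a decomposition piece, the integrand is dominated by its shift. -/
lemma gfun_le_shift_SM {F : Set (Cyl d N)} (hlam : 0 < lam) (hAF : ∀ x ∈ A, x ∈ F)
    (p : SMIdx F (Btl d N j)) {ω : ℕ → Cyl d N} (h : ω ∈ SMset F (Btl d N j) p) :
    gfun d N j lam A ω ≤ gfun d N j lam A (shf p.1 ω) := by
  obtain ⟨hp1, hp2, hp3⟩ := SMset_subset F (Btl d N j) p h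
  refine Finset.prod_le_prod' fun x hx => ?_
  by_cases hD : entT {x} ω < exitT (Btl d N j) ω
  · rw [if_pos hD]
    obtain ⟨k, hk, hV⟩ := entT_lt_exitT_iff.mp hD
    simp only [Set.mem_singleton_iff] at hk
    have hnk : p.1 ≤ k := by
      by_contra hc
      exact hp2 k (by omega) (by rw [hk]; exact hAF x hx)
    have hD' : entT {x} (shf p.1 ω) < exitT (Btl d N j) (shf p.1 ω) := by
      refine entT_lt_exitT_iff.mpr ⟨k - p.1, ?_, fun i hi => ?_⟩
      · show ω (k - p.1 + p.1) = x
        rw [show k - p.1 + p.1 = k by omega]; exact hk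
      · show ω (i + p.1) ∈ Btl d N j
        exact hV (i + p.1) (by omega)
    rw [if_pos hD']
  · rw [if_neg hD]
    split
    · exact one_le_ofReal_exp hlam
    · exact le_rfl

/-- Strong Markov bound for `Phi`. -/
lemma Phi_strong (hPl : IsCylRW d N Pl) (hlam : 0 < lam) {F : Set (Cyl d N)}
    (hAF : ∀ x ∈ A, x ∈ F) (z : Cyl d N) (SB : ℝ≥0∞)
    (hSB : ∀ x ∈ F, Phi d N Pl j lam A x ≤ SB) :
    Phi d N Pl j lam A z ≤
      Pl z {ω : ℕ → Cyl d N | entT F ω < exitT (Btl d N j) ω}ᶜ +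
        Pl z {ω : ℕ → Cyl d N | entT F ω < exitT (Btl d N j) ω} * SB := by
  set V := Btl d N j with hV
  set D := {ω : ℕ → Cyl d N | entT F ω < exitT V ω} with hD
  have hDm : MeasurableSet D := msEnt F V
  have hsplit : Phi d N Pl j lam A z =
      (∫⁻ ω in D, gfun d N j lam A ω ∂(Pl z)) +
        ∫⁻ ω in Dᶜ, gfun d N j lam A ω ∂(Pl z) :=
    (lintegral_add_compl _ hDm).symm
  have hcompl : (∫⁻ ω in Dᶜ, gfun d N j lam A ω ∂(Pl z)) = Pl z Dᶜ := by
    rw [setLIntegral_congr_fun hDm.compl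
      (fun ω hω => gfun_eq_one hAF hω)]
    simp
  have hmain : (∫⁻ ω in D, gfun d N j lam A ω ∂(Pl z)) ≤ Pl z D * SB := by
    rw [show Pl z D = Pl z (⋃ p : SMIdx F V, SMset F V p) by rw [← SM_decomp F V]]
    have hmeas : ∀ p : SMIdx F V, MeasurableSet (SMset F V p) :=
      fun p => msPcyl _ _
    rw [show (∫⁻ ω in D, gfun d N j lam A ω ∂(Pl z)) =
        ∫⁻ ω in ⋃ p : SMIdx F V, SMset F V p, gfun d N j lam A ω ∂(Pl z) by
      rw [← SM_decomp F V]]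
    rw [lintegral_iUnion hmeas (SM_disjoint F V)]
    have hterm : ∀ p : SMIdx F V,
        (∫⁻ ω in SMset F V p, gfun d N j lam A ω ∂(Pl z)) ≤
          Pl z (SMset F V p) * SB := by
      intro p
      have h1 : (∫⁻ ω in SMset F V p, gfun d N j lam A ω ∂(Pl z)) ≤
          ∫⁻ ω in SMset F V p, gfun d N j lam A (shf p.1 ω) ∂(Pl z) := by
        refine setLIntegral_mono (measurable_gfun.comp (measurable_shf p.1)) ?_
        exact fun ω hω => gfun_le_shift_SM hlam hAF p hω
      have h2 : (∫⁻ ω in SMset F V p, gfun d N j lam A (shf p.1 ω) ∂(Pl z)) =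
          wgt d N z (extg p.2.1) p.1 * Phi d N Pl j lam A (extg p.2.1 p.1) := by
        rw [← lintegral_map measurable_gfun (measurable_shf p.1)]
        rw [show (Pl z).restrict (SMset F V p) = (Pl z).restrict (pcyl (extg p.2.1) p.1) from rfl]
        rw [markov_fact hPl z (extg p.2.1) p.1, lintegral_smul_measure]
        rfl
      have h3 : extg p.2.1 p.1 ∈ F := by
        rw [extg_eq _ le_rfl]
        have hlast := p.2.2.1
        have heq : (⟨p.1, by omega⟩ : Fin (p.1 + 1)) = Fin.last p.1 := Fin.ext (by simp)
        rw [heq]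
        exact hlast
      calc (∫⁻ ω in SMset F V p, gfun d N j lam A ω ∂(Pl z)) ≤
          wgt d N z (extg p.2.1) p.1 * Phi d N Pl j lam A (extg p.2.1 p.1) := h1.trans h2.le
      _ ≤ wgt d N z (extg p.2.1) p.1 * SB := mul_le_mul_right (hSB _ h3) _
      _ = Pl z (SMset F V p) * SB := by
          congr 1
          exact (pl_pcyl hPl z (extg p.2.1) p.1).symm
    calc (∑' p : SMIdx F V, ∫⁻ ω in SMset F V p, gfun d N j lam A ω ∂(Pl z)) ≤
        ∑' p : SMIdx F V, Pl z (SMset F V p) * SB := ENNReal.tsum_le_tsum hterm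
    _ = (∑' p : SMIdx F V, Pl z (SMset F V p)) * SB := ENNReal.tsum_mul_right
    _ = Pl z (⋃ p : SMIdx F V, SMset F V p) * SB := by
        rw [← measure_iUnion (SM_disjoint F V) (fun p => msPcyl _ _)]
  rw [hsplit, hcompl, add_comm]
  exact add_le_add le_rfl hmain

end StrongMarkov
section Geom

variable {d N : ℕ}

lemma projE_add (a b : Lat d) : projE d N (a + b) = projE d N a + projE d N b := by
  refine Prod.ext ?_ ?_
  · funext k
    simp [projE]
  · simp [projE]

lemma projE_sub (a b : Lat d) : projE d N (a - b) = projE d N a - projE d N b := by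
  refine Prod.ext ?_ ?_
  · funext k
    simp [projE]
  · simp [projE]

lemma projE_dvd_of_eq_zero (hN : 1 ≤ N) {v : Lat d} (h : projE d N v = (0 : Cyl d N))
    (i : Fin (d + 1)) : (N : ℤ) ∣ v i := by
  haveI : NeZero N := ⟨by omega⟩
  have h1 : (fun k : Fin d => ((v k.castSucc : ZMod N))) = 0 := congrArg Prod.fst h
  have h2 : v (Fin.last d) = 0 := congrArg Prod.snd h
  refine Fin.lastCases ?_ ?_ i
  · rw [h2]; exact dvd_zero _
  · intro k
    have h3 := congrFun h1 k
    exact (ZMod.intCast_zmod_eq_zero_iff_dvd _ N).mp (by simpa using h3)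

lemma unitVecs_injective {d : ℕ} :
    Function.Injective (fun p : Fin (d + 1) × Bool =>
      (Pi.single p.1 (if p.2 then (1 : ℤ) else -1) : Lat d)) := by
  rintro ⟨i, b⟩ ⟨i', b'⟩ h
  have hne : ∀ (c : Bool), (if c then (1:ℤ) else -1) ≠ 0 := by intro c; cases c <;> simp
  have hii : i = i' := by
    by_contra hc
    have hci := congrFun h i
    dsimp only at hci
    rw [Pi.single_eq_same, Pi.single_eq_of_ne hc] at hci
    exact hne b hci
  subst hii
  have hci := congrFun h i
  dsimp only at hci
  rw [Pi.single_eq_same, Pi.single_eq_same] at hci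
  have hbb : b = b' := by cases b <;> cases b' <;> simp_all <;> omega
  rw [hbb]

lemma single_mem_unitVecs (i : Fin (d + 1)) (b : Bool) :
    Pi.single i (if b then (1:ℤ) else -1) ∈ unitVecs d :=
  Finset.mem_image.mpr ⟨(i, b), Finset.mem_univ _, rfl⟩

lemma projE_single_ne_zero (hN : 2 ≤ N) (i : Fin (d + 1)) {c : ℤ} (hc : c = 1 ∨ c = -1) :
    projE d N (Pi.single i c) ≠ 0 := by
  intro h
  have hd0 := projE_dvd_of_eq_zero (by omega) h i
  have hd : (N : ℤ) ∣ c := by simpa using hd0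
  have hle : (N : ℤ) ≤ 1 := by
    rcases hc with rfl | rfl
    · exact Int.le_of_dvd one_pos hd
    · exact Int.le_of_dvd one_pos (dvd_neg.mp (by simpa using hd))
  omega

variable {I : Finset (Fin (d + 1))} {y0 : Lat d}

lemma mem_F_step (x : Cyl d N)
    (hx : x ∈ (fun v => projE d N (y0 + v)) '' {v : Lat d | ∀ i ∉ I, v i = 0})
    {i : Fin (d + 1)} (hiI : i ∈ I) (c : ℤ) :
    x + projE d N (Pi.single i c) ∈
      (fun v => projE d N (y0 + v)) '' {v : Lat d | ∀ i ∉ I, v i = 0} := by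
  obtain ⟨v, hv, hveq⟩ := hx
  replace hveq : projE d N (y0 + v) = x := hveq
  refine ⟨v + Pi.single i c, ?_, ?_⟩
  · intro k hk
    have hki : k ≠ i := fun h => hk (h ▸ hiI)
    simp only [Pi.add_apply, Pi.single_eq_of_ne hki, add_zero]
    exact hv k hk
  · show projE d N (y0 + (v + Pi.single i c)) = x + projE d N (Pi.single i c)
    rw [show y0 + (v + Pi.single i c) = (y0 + v) + Pi.single i c by ring, projE_add, hveq]

lemma not_mem_F_step (hN : 2 ≤ N) {x : Cyl d N}
    (hx : x ∈ (fun v => projE d N (y0 + v)) '' {v : Lat d | ∀ i ∉ I, v i = 0})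
    {i : Fin (d + 1)} (hiI : i ∉ I) {c : ℤ} (hc : c = 1 ∨ c = -1) :
    x + projE d N (Pi.single i c) ∉
      (fun v => projE d N (y0 + v)) '' {v : Lat d | ∀ i ∉ I, v i = 0} := by
  rintro ⟨w, hw, hweq⟩
  replace hweq : projE d N (y0 + w) = x + projE d N (Pi.single i c) := hweq
  obtain ⟨v, hv, hveq⟩ := hx
  replace hveq : projE d N (y0 + v) = x := hveq
  have h0 : projE d N (w - v - Pi.single i c) = 0 := by
    have e1 : w - v - Pi.single i c = (y0 + w) - (y0 + v) - Pi.single i c := by ring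
    rw [e1, projE_sub, projE_sub, hweq, hveq]
    show x + projE d N (Pi.single i c) - x - projE d N (Pi.single i c) = 0
    abel
  have hd := projE_dvd_of_eq_zero (by omega) h0 i
  have he : (w - v - (Pi.single i c : Lat d)) i = -c := by
    simp [hv i hiI, hw i hiI, Pi.single_eq_same]
  rw [he] at hd
  have hle : (N : ℤ) ≤ 1 := by
    rcases hc with rfl | rfl
    · exact Int.le_of_dvd one_pos (by simpa using dvd_neg.mp hd)
    · exact Int.le_of_dvd one_pos (by simpa using hd)
  omega

lemma bdry_step (hN : 2 ≤ N) {x : Cyl d N}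
    (hx : x ∈ (fun v => projE d N (y0 + v)) '' {v : Lat d | ∀ i ∉ I, v i = 0})
    {i : Fin (d + 1)} (hiI : i ∉ I) (b : Bool) :
    x + projE d N (Pi.single i (if b then (1:ℤ) else -1)) ∈
      bdry d N ((fun v => projE d N (y0 + v)) '' {v : Lat d | ∀ i ∉ I, v i = 0}) := by
  set c : ℤ := if b then 1 else -1 with hcdef
  have hc : c = 1 ∨ c = -1 := by cases b <;> simp [hcdef]
  refine ⟨not_mem_F_step hN hx hiI hc, x, hx, ?_, ?_⟩
  · intro heq
    exact projE_single_ne_zero hN i hc (add_eq_left.mp heq)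
  · refine ⟨(Pi.single i (if !b then (1:ℤ) else -1) : Lat d), single_mem_unitVecs i (!b), ?_⟩
    have hsum : (Pi.single i c : Lat d) + Pi.single i (if !b then (1:ℤ) else -1) = 0 := by
      have : (if !b then (1:ℤ) else -1) = -c := by cases b <;> simp [hcdef]
      rw [this, ← Pi.single_add]
      simp
    rw [add_assoc, ← projE_add, hsum]
    show x = x + projE d N 0
    have : projE d N (0 : Lat d) = 0 := by
      refine Prod.ext (funext fun k => ?_) ?_ <;> simp [projE]
    rw [this, add_zero]

end Geom

/-- **Lemma 1.3.** For `d ≥ 3`, `1 ≤ m ≤ d-2`, `λ > 0` with `e^λ m < d+1` and `N ≥ 2`: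
for any `j ∈ ℤ`, `F ∈ L_m` and nonempty `A ⊆ F ∩ (C_j ∪ ∂C_j)`,
`‖φ_j‖_∞ ≤ e^λ/(1 - e^λ m/(d+1)) · (1 - m/(d+1)) · (1 + (‖φ_j‖_∞ - 1) q_N)`. -/
theorem statement_5 (d N m : ℕ) (hd : 3 ≤ d) (hm1 : 1 ≤ m) (hm2 : m ≤ d - 2) (hN : 2 ≤ N)
    (lam : ℝ) (hlam : 0 < lam) (hlam2 : Real.exp lam * m < (d : ℝ) + 1)
    (Pl : Cyl d N → Measure (ℕ → Cyl d N)) (hPl : IsCylRW d N Pl)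
    (j : ℤ) (F : Set (Cyl d N)) (hF : F ∈ Lcoll d N m)
    (A : Finset (Cyl d N)) (hA : A.Nonempty)
    (hAF : (↑A : Set (Cyl d N)) ⊆ F ∩ (Cblk d N j ∪ bdry d N (Cblk d N j))) :
    phiSup d N Pl j lam A ≤
      Real.exp lam / (1 - Real.exp lam * m / ((d : ℝ) + 1)) * (1 - (m : ℝ) / (d + 1)) *
        (1 + (phiSup d N Pl j lam A - 1) * qNval d N m Pl j) := by
  classical
  haveI : ∀ x, IsProbabilityMeasure (Pl x) := hPl.1
  obtain ⟨I, hIcard, y0, hFeq⟩ := hF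
  have hF' : F ∈ Lcoll d N m := ⟨I, hIcard, y0, hFeq⟩
  have ht1 : (1:ℝ) ≤ Real.exp lam := Real.one_le_exp hlam.le
  have ht0 : (0:ℝ) < Real.exp lam := Real.exp_pos lam
  -- basic facts about phi
  have hMne : ENNReal.ofReal (Real.exp lam) ^ A.card ≠ ⊤ :=
    ENNReal.pow_ne_top ENNReal.ofReal_ne_top
  have hphi_eq : ∀ z, phi d N Pl j lam A z = (Phi d N Pl j lam A z).toReal :=
    fun z => phi_eq hPl z
  have hPhi_ne : ∀ z, Phi d N Pl j lam A z ≠ ⊤ := Phi_ne_top hPl hlam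
  have hphile : ∀ z, phi d N Pl j lam A z ≤ (ENNReal.ofReal (Real.exp lam) ^ A.card).toReal :=
    fun z => by
      rw [hphi_eq z]; exact ENNReal.toReal_mono hMne (Phi_le hPl hlam z)
  have hphi1 : ∀ z, (1:ℝ) ≤ phi d N Pl j lam A z := fun z => by
    rw [hphi_eq z]
    have h := ENNReal.toReal_mono (hPhi_ne z) (one_le_Phi hPl hlam z)
    simpa using h
  have hbdd : BddAbove (Set.range (phi d N Pl j lam A)) := by
    refine ⟨(ENNReal.ofReal (Real.exp lam) ^ A.card).toReal, ?_⟩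
    rintro y ⟨z, rfl⟩; exact hphile z
  have hphis : ∀ z, phi d N Pl j lam A z ≤ phiSup d N Pl j lam A :=
    fun z => le_ciSup hbdd z
  have hsup_le : ∀ b : ℝ, (∀ z, phi d N Pl j lam A z ≤ b) → phiSup d N Pl j lam A ≤ b :=
    fun b hb => ciSup_le hb
  -- A and F
  have hAFmem : ∀ x ∈ A, x ∈ F := fun x hx => (hAF hx).1
  obtain ⟨x0, hx0A⟩ := hA
  have hx0F : x0 ∈ F := hAFmem x0 hx0A
  set s := phiSup d N Pl j lam A with hsdef
  have hs1 : (1:ℝ) ≤ s := le_trans (hphi1 x0) (hphis x0)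
  -- sup over F
  set sF := sSup (phi d N Pl j lam A '' F) with hsFdef
  have hbddF : BddAbove (phi d N Pl j lam A '' F) := by
    refine ⟨(ENNReal.ofReal (Real.exp lam) ^ A.card).toReal, ?_⟩
    rintro y ⟨x, -, rfl⟩; exact hphile x
  have hsF_mem : ∀ x ∈ F, phi d N Pl j lam A x ≤ sF :=
    fun x hx => le_csSup hbddF ⟨x, hx, rfl⟩
  have hsF1 : (1:ℝ) ≤ sF := le_trans (hphi1 x0) (hsF_mem x0 hx0F)
  have hsFs : sF ≤ s := csSup_le ⟨_, ⟨x0, hx0F, rfl⟩⟩ (by rintro y ⟨x, -, rfl⟩; exact hphis x)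
  have hsF0 : (0:ℝ) ≤ sF := by linarith
  -- uniform bound on probabilities
  have htoone : ∀ (z' : Cyl d N) (S : Set (ℕ → Cyl d N)), (Pl z' S).toReal ≤ 1 := by
    intro z' S
    have h := ENNReal.toReal_mono ENNReal.one_ne_top (prob_le_one (μ := Pl z') (s := S))
    simpa using h
  -- Step I
  set Dset := {ω : ℕ → Cyl d N | entT F ω < exitT (Btl d N j) ω} with hDsetdef
  have hDm : MeasurableSet Dset := msEnt F (Btl d N j)
  have stepI : ∀ z, phi d N Pl j lam A z ≤
      (1 - (Pl z Dset).toReal) + (Pl z Dset).toReal * sF := by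
    intro z
    have hSB : ∀ x ∈ F, Phi d N Pl j lam A x ≤ ENNReal.ofReal sF := by
      intro x hx
      rw [← ENNReal.ofReal_toReal (hPhi_ne x)]
      exact ENNReal.ofReal_le_ofReal (by rw [← hphi_eq x]; exact hsF_mem x hx)
    have h1 := Phi_strong hPl hlam hAFmem z (ENNReal.ofReal sF) hSB
    rw [hphi_eq z]
    have hterm_ne : Pl z Dset * ENNReal.ofReal sF ≠ ⊤ :=
      ENNReal.mul_ne_top (measure_ne_top _ _) ENNReal.ofReal_ne_top
    have hfin : Pl z Dsetᶜ + Pl z Dset * ENNReal.ofReal sF ≠ ⊤ :=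
      ENNReal.add_ne_top.mpr ⟨measure_ne_top _ _, hterm_ne⟩
    refine le_trans (ENNReal.toReal_mono hfin h1) ?_
    rw [ENNReal.toReal_add (measure_ne_top _ _) hterm_ne, ENNReal.toReal_mul,
      ENNReal.toReal_ofReal hsF0]
    have hcompl : (Pl z Dsetᶜ).toReal = 1 - (Pl z Dset).toReal := by
      rw [prob_compl_eq_one_sub hDm, ENNReal.toReal_sub_of_le prob_le_one ENNReal.one_ne_top]
      simp
    rw [hcompl]
  have hs_le_sF : s ≤ sF := by
    rw [hsdef]
    refine hsup_le _ fun z => ?_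
    have h1 := stepI z
    have h2 : (0:ℝ) ≤ (Pl z Dset).toReal := ENNReal.toReal_nonneg
    have h3 := htoone z Dset
    nlinarith [mul_nonneg (by linarith : (0:ℝ) ≤ 1 - (Pl z Dset).toReal)
      (by linarith : (0:ℝ) ≤ sF - 1)]
  -- q facts
  set q := qNval d N m Pl j with hqdef
  have hq0 : (0:ℝ) ≤ q := by
    rw [hqdef]
    refine Real.sSup_nonneg ?_
    rintro r ⟨F', -, z, -, rfl⟩
    exact ENNReal.toReal_nonneg
  have hqb : ∀ z ∈ bdry d N F, (Pl z Dset).toReal ≤ q := by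
    intro z hz
    rw [hqdef]
    refine le_csSup ⟨1, ?_⟩ ⟨F, hF', z, hz, rfl⟩
    rintro r ⟨F', -, z', -, rfl⟩
    exact htoone z' _
  set bb := 1 + q * (s - 1) with hbbdef
  have hbdryB : ∀ z ∈ bdry d N F, phi d N Pl j lam A z ≤ bb := by
    intro z hz
    have h1 := stepI z
    have h2 : (0:ℝ) ≤ (Pl z Dset).toReal := ENNReal.toReal_nonneg
    have h3 := htoone z Dset
    have h4 := hqb z hz
    rw [hbbdef]
    nlinarith [mul_le_mul_of_nonneg_right h4 (by linarith : (0:ℝ) ≤ sF - 1),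
      mul_le_mul_of_nonneg_left (sub_le_sub_right hsFs 1) hq0]
  -- Step II
  have hm_le : (m:ℝ) ≤ (d:ℝ) + 1 := by exact_mod_cast by omega
  have hdpos : (0:ℝ) < (d:ℝ) + 1 := by positivity
  have hden_toReal : ((2 * ((d:ℝ≥0∞) + 1))).toReal = 2 * ((d:ℝ) + 1) := by
    rw [ENNReal.toReal_mul, ENNReal.toReal_add (by simp) (by simp)]
    simp
  have stepII : ∀ x ∈ F, phi d N Pl j lam A x ≤
      Real.exp lam * (((m:ℝ) / ((d:ℝ) + 1)) * s + (1 - (m:ℝ) / ((d:ℝ) + 1)) * bb) := by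
    intro x hx
    have h1 := Phi_step (j := j) (lam := lam) (A := A) hPl hlam x
    have hsum_ne : (∑ e ∈ unitVecs d, Phi d N Pl j lam A (x + projE d N e)) ≠ ⊤ :=
      ENNReal.sum_ne_top.mpr fun e _ => hPhi_ne _
    have hfin2 : ENNReal.ofReal (Real.exp lam) *
        ((2 * ((d:ℝ≥0∞) + 1))⁻¹ * ∑ e ∈ unitVecs d, Phi d N Pl j lam A (x + projE d N e)) ≠ ⊤ :=
      ENNReal.mul_ne_top ENNReal.ofReal_ne_top
        (ENNReal.mul_ne_top (ENNReal.inv_ne_top.mpr (by simp)) hsum_ne)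
    have h2 : phi d N Pl j lam A x ≤ Real.exp lam *
        ((2 * ((d:ℝ) + 1))⁻¹ * ∑ e ∈ unitVecs d, phi d N Pl j lam A (x + projE d N e)) := by
      rw [hphi_eq x]
      refine le_trans (ENNReal.toReal_mono hfin2 h1) (le_of_eq ?_)
      rw [ENNReal.toReal_mul, ENNReal.toReal_mul, ENNReal.toReal_ofReal ht0.le,
        ENNReal.toReal_inv, ENNReal.toReal_sum (fun e _ => hPhi_ne _), hden_toReal]
      congr 1
      congr 1
      exact Finset.sum_congr rfl fun e _ => (hphi_eq _).symm
    have hsplit : (∑ e ∈ unitVecs d, phi d N Pl j lam A (x + projE d N e)) ≤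
        2 * ((m:ℝ) * s + (((d:ℝ) + 1) - m) * bb) := by
      rw [show unitVecs d = Finset.image (fun p : Fin (d + 1) × Bool =>
          (Pi.single p.1 (if p.2 then (1 : ℤ) else -1) : Lat d)) Finset.univ from rfl,
        Finset.sum_image (fun p _ p' _ hpe => unitVecs_injective hpe)]
      have hterm : ∀ p : Fin (d+1) × Bool, p ∈ (Finset.univ : Finset (Fin (d+1) × Bool)) →
          phi d N Pl j lam A (x + projE d N (Pi.single p.1 (if p.2 then (1:ℤ) else -1))) ≤
            (if p.1 ∈ I then s else bb) := by
        rintro ⟨i, b⟩ -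
        by_cases hpI : i ∈ I
        · rw [if_pos hpI]; exact hphis _
        · rw [if_neg hpI]
          refine hbdryB _ ?_
          have hxF : x ∈ (fun v => projE d N (y0 + v)) '' {v : Lat d | ∀ i ∉ I, v i = 0} :=
            hFeq ▸ hx
          have hb := bdry_step (N := N) hN hxF hpI b
          rw [← hFeq] at hb
          exact hb
      refine le_trans (Finset.sum_le_sum hterm) (le_of_eq ?_)
      have hprod : (∑ p : Fin (d+1) × Bool, (if p.1 ∈ I then s else bb)) =
          2 * ∑ i : Fin (d+1), (if i ∈ I then s else bb) := by
        rw [Fintype.sum_prod_type, Finset.mul_sum]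
        refine Finset.sum_congr rfl fun i _ => ?_
        rw [Fintype.sum_bool]
        show (if i ∈ I then s else bb) + (if i ∈ I then s else bb) = _
        ring
      rw [hprod]
      congr 1
      rw [Finset.sum_ite, Finset.sum_const, Finset.sum_const, Finset.filter_univ_mem, hIcard]
      have hcard2 : (Finset.univ.filter (fun i : Fin (d+1) => ¬ i ∈ I)).card = (d+1) - m := by
        have hcompl : Finset.univ.filter (fun i : Fin (d+1) => ¬ i ∈ I) = Iᶜ := by
          ext i; simp
        rw [hcompl, Finset.card_compl, hIcard]
        simp
      rw [hcard2, nsmul_eq_mul, nsmul_eq_mul]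
      have hcast : (((d+1) - m : ℕ) : ℝ) = ((d:ℝ) + 1) - m := by
        have hmd : m ≤ d + 1 := by omega
        rw [Nat.cast_sub hmd]
        push_cast
        ring
      rw [hcast]
    calc phi d N Pl j lam A x ≤ Real.exp lam *
        ((2 * ((d:ℝ) + 1))⁻¹ * ∑ e ∈ unitVecs d, phi d N Pl j lam A (x + projE d N e)) := h2
    _ ≤ Real.exp lam * ((2 * ((d:ℝ) + 1))⁻¹ * (2 * ((m:ℝ) * s + (((d:ℝ) + 1) - m) * bb))) := by
        refine mul_le_mul_of_nonneg_left ?_ ht0.le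
        exact mul_le_mul_of_nonneg_left hsplit (by positivity)
    _ = Real.exp lam * (((m:ℝ) / ((d:ℝ) + 1)) * s + (1 - (m:ℝ) / ((d:ℝ) + 1)) * bb) := by
        field_simp
  -- key inequality and final algebra
  have key : s ≤ Real.exp lam * (((m:ℝ) / ((d:ℝ) + 1)) * s + (1 - (m:ℝ) / ((d:ℝ) + 1)) * bb) :=
    le_trans hs_le_sF (csSup_le ⟨_, ⟨x0, hx0F, rfl⟩⟩
      (by rintro y ⟨x, hxF, rfl⟩; exact stepII x hxF))
  have hden : (0:ℝ) < 1 - Real.exp lam * m / ((d:ℝ) + 1) := by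
    have hlt : Real.exp lam * m / ((d:ℝ) + 1) < 1 := (div_lt_one hdpos).mpr hlam2
    linarith
  rw [div_mul_eq_mul_div, div_mul_eq_mul_div, le_div_iff₀ hden]
  have hexpand : Real.exp lam * (((m:ℝ) / ((d:ℝ) + 1)) * s + (1 - (m:ℝ) / ((d:ℝ) + 1)) * bb) =
      Real.exp lam * ((m:ℝ) / ((d:ℝ) + 1)) * s +
        Real.exp lam * (1 - (m:ℝ) / ((d:ℝ) + 1)) * bb := by ring
  rw [hexpand] at key
  calc s * (1 - Real.exp lam * ↑m / ((d:ℝ) + 1)) =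
      s - Real.exp lam * ((m:ℝ) / ((d:ℝ) + 1)) * s := by ring
  _ ≤ Real.exp lam * (1 - (m:ℝ) / ((d:ℝ) + 1)) * bb := by linarith
  _ = Real.exp lam * (1 - (m:ℝ) / ((d:ℝ) + 1)) * (1 + (s - 1) * q) := by
      rw [hbbdef]; ring

end DiscCyl
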